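/- (Harmonic solutions) Fix m, N ∈ ℕ and k ∈ {2,...,N}. Define H^k : ℝ^{⌊N/k⌋+1} → ℝ^{N+1} by (H^k a)_n = a_i if n = i·k for some integer i, and 0 otherwise. If a satisfies the matching equation a = C^{mk}_{⌊N/k⌋}(a), then H^k(a) satisfies the matching equation H^k(a) = C^m_N(H^k(a)). -/

import Mathlib

/-- The cubic matching map `C^m_N`: component `n` is
`∑_{i+j+k=n, -N ≤ i,j,k ≤ N} (-1)^{m(|i|+|j|-|k|-n)/2} a_{|i|} a_{|j|} a_{|k|}`. -/
noncomputable def cubicMatchSeq (m N : ℕ) (a : ℕ → ℝ) (n : ℤ) : ℝ :=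
  ∑ p ∈ (Finset.Icc (-(N : ℤ)) (N : ℤ) ×ˢ Finset.Icc (-(N : ℤ)) (N : ℤ) ×ˢ
      Finset.Icc (-(N : ℤ)) (N : ℤ)).filter (fun p => p.1 + p.2.1 + p.2.2 = n),
    (-1 : ℝ) ^ (((m : ℤ) * (|p.1| + |p.2.1| - |p.2.2| - n)) / 2) *
      a p.1.natAbs * a p.2.1.natAbs * a p.2.2.natAbs

/-- Harmonic solutions: if `a` solves the matching equation at order
`(mk, ⌊N/k⌋)`, then its embedding `H^k(a)` (placing `a_i` at index `ik` and
zeros elsewhere) solves the matching equation at order `(m, N)`. -/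
theorem stmt_14 (m N k : ℕ) (hk : 2 ≤ k) (hkN : k ≤ N) (a : ℕ → ℝ)
    (ha : ∀ n : ℕ, n ≤ N / k → a n = cubicMatchSeq (m * k) (N / k) a (n : ℤ)) :
    ∀ n : ℕ, n ≤ N →
      (fun j : ℕ => if k ∣ j then a (j / k) else 0) n
        = cubicMatchSeq m N (fun j : ℕ => if k ∣ j then a (j / k) else 0) (n : ℤ) := by
  have hk0 : 0 < k := by omega
  have hkz : (0:ℤ) < (k:ℤ) := by exact_mod_cast hk0
  have hkz' : (k:ℤ) ≠ 0 := by positivity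
  have hdvdiff : ∀ z : ℤ, k ∣ z.natAbs ↔ (k:ℤ) ∣ z := by
    intro z
    rw [Int.natCast_dvd_natCast.symm, Int.dvd_natAbs]
  set b : ℕ → ℝ := fun j : ℕ => if k ∣ j then a (j / k) else 0 with hb
  intro n hn
  by_cases hdvd : k ∣ n
  · obtain ⟨n', rfl⟩ := hdvd
    have hn' : n' ≤ N / k :=
      Nat.le_div_iff_mul_le hk0 |>.mpr (by rw [mul_comm]; exact hn)
    have hbL : b (k * n') = a n' := by
      rw [hb]; simp [Nat.mul_div_cancel_left _ hk0]
    rw [hbL, ha n' hn']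
    unfold cubicMatchSeq
    have hne : ∀ p ∈ (Finset.Icc (-(N : ℤ)) (N : ℤ) ×ˢ Finset.Icc (-(N : ℤ)) (N : ℤ) ×ˢ
        Finset.Icc (-(N : ℤ)) (N : ℤ)).filter (fun p => p.1 + p.2.1 + p.2.2 = ((k*n' : ℕ) : ℤ)),
        (-1 : ℝ) ^ (((m : ℤ) * (|p.1| + |p.2.1| - |p.2.2| - ((k*n' : ℕ) : ℤ))) / 2) *
          b p.1.natAbs * b p.2.1.natAbs * b p.2.2.natAbs ≠ 0 →
        (fun p : ℤ × ℤ × ℤ => (k:ℤ) ∣ p.1 ∧ (k:ℤ) ∣ p.2.1 ∧ (k:ℤ) ∣ p.2.2) p := by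
      rintro ⟨i, j, l⟩ _ hne
      by_cases hi : (k:ℤ) ∣ i
      · by_cases hj : (k:ℤ) ∣ j
        · by_cases hl : (k:ℤ) ∣ l
          · exact ⟨hi, hj, hl⟩
          · exact absurd (by
              have : b l.natAbs = 0 := by
                rw [hb]; simp only [if_neg (fun hh => hl ((hdvdiff l).mp hh))]
              simp [this]) hne
        · exact absurd (by
            have : b j.natAbs = 0 := by
              rw [hb]; simp only [if_neg (fun hh => hj ((hdvdiff j).mp hh))]
            simp [this]) hne
      · exact absurd (by
          have : b i.natAbs = 0 := by
            rw [hb]; simp only [if_neg (fun hh => hi ((hdvdiff i).mp hh))]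
          simp [this]) hne
    conv_rhs => rw [← Finset.sum_filter_of_ne hne]
    have hNk : (k:ℤ) * (↑(N/k):ℤ) ≤ (N:ℤ) := by exact_mod_cast Nat.mul_div_le N k
    apply Finset.sum_nbij' (i := fun p : ℤ × ℤ × ℤ => ((k:ℤ)*p.1, (k:ℤ)*p.2.1, (k:ℤ)*p.2.2))
      (j := fun p : ℤ × ℤ × ℤ => (p.1/(k:ℤ), p.2.1/(k:ℤ), p.2.2/(k:ℤ)))
    · rintro ⟨i, j, l⟩ hp
      simp only [Finset.mem_filter, Finset.mem_product, Finset.mem_Icc] at hp ⊢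
      obtain ⟨⟨⟨hi1, hi2⟩, ⟨hj1, hj2⟩, hl1, hl2⟩, hsum⟩ := hp
      have key : ∀ z : ℤ, -(↑(N/k):ℤ) ≤ z → z ≤ (↑(N/k):ℤ) →
          -(N:ℤ) ≤ (k:ℤ)*z ∧ (k:ℤ)*z ≤ (N:ℤ) := by
        intro z h1 h2
        have : |(k:ℤ)*z| ≤ (N:ℤ) := by
          rw [abs_mul, abs_of_pos hkz]
          calc (k:ℤ)*|z| ≤ (k:ℤ)*(↑(N/k):ℤ) :=
                mul_le_mul_of_nonneg_left (abs_le.mpr ⟨h1, h2⟩) hkz.le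
            _ ≤ (N:ℤ) := hNk
        exact abs_le.mp this
      refine ⟨⟨⟨key i hi1 hi2, key j hj1 hj2, key l hl1 hl2⟩, ?_⟩, ⟨i, rfl⟩, ⟨j, rfl⟩, ⟨l, rfl⟩⟩
      push_cast
      rw [show (k:ℤ)*i + (k:ℤ)*j + (k:ℤ)*l = (k:ℤ)*(i+j+l) from by ring, hsum]
    · rintro ⟨i, j, l⟩ hp
      simp only [Finset.mem_filter, Finset.mem_product, Finset.mem_Icc] at hp ⊢
      obtain ⟨⟨⟨⟨hi1, hi2⟩, ⟨hj1, hj2⟩, hl1, hl2⟩, hsum⟩, ⟨i', rfl⟩, ⟨j', rfl⟩, ⟨l', rfl⟩⟩ := hp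
      rw [Int.mul_ediv_cancel_left _ hkz', Int.mul_ediv_cancel_left _ hkz',
        Int.mul_ediv_cancel_left _ hkz']
      have hc : ∀ z : ℤ, -(N:ℤ) ≤ (k:ℤ)*z → (k:ℤ)*z ≤ (N:ℤ) →
          -(↑(N/k):ℤ) ≤ z ∧ z ≤ (↑(N/k):ℤ) := by
        intro z h1 h2
        have habs : (k:ℤ) * |z| ≤ (N:ℤ) := by
          have := abs_le.mpr ⟨h1, h2⟩
          rw [abs_mul, abs_of_pos hkz] at this
          exact this
        have h3 : |z| ≤ (↑(N/k):ℤ) := by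
          rw [show (↑(N/k):ℤ) = (N:ℤ)/(k:ℤ) from (Int.natCast_div N k)]
          exact Int.le_ediv_iff_mul_le hkz |>.mpr (by linarith)
        exact abs_le.mp h3
      refine ⟨⟨hc i' hi1 hi2, hc j' hj1 hj2, hc l' hl1 hl2⟩, ?_⟩
      have heq : (k:ℤ) * (i' + j' + l') = (k:ℤ) * (n':ℤ) := by push_cast at hsum ⊢; linarith
      exact mul_left_cancel₀ hkz' heq
    · rintro ⟨i, j, l⟩ _
      simp [Int.mul_ediv_cancel_left _ hkz']
    · rintro ⟨i, j, l⟩ hp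
      simp only [Finset.mem_filter] at hp
      obtain ⟨_, ⟨i', rfl⟩, ⟨j', rfl⟩, ⟨l', rfl⟩⟩ := hp
      simp [Int.mul_ediv_cancel_left _ hkz']
    · rintro ⟨i, j, l⟩ _
      have habs : ∀ z : ℤ, |(k:ℤ)*z| = (k:ℤ)*|z| := by
        intro z; rw [abs_mul, abs_of_pos hkz]
      have hbv : ∀ z : ℤ, b ((k:ℤ)*z).natAbs = a z.natAbs := by
        intro z
        rw [show ((k:ℤ)*z).natAbs = k * z.natAbs from by rw [Int.natAbs_mul]; simp, hb]
        simp [Nat.mul_div_cancel_left _ hk0]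
      simp only
      rw [hbv, hbv, hbv, habs, habs, habs]
      have hexp : ((m:ℤ) * ((k:ℤ)*|i| + (k:ℤ)*|j| - (k:ℤ)*|l| - ((k*n' : ℕ) : ℤ)))
          = ((↑(m*k):ℤ) * (|i| + |j| - |l| - (n':ℤ))) := by push_cast; ring
      rw [hexp]
  · have hbL : b n = 0 := by rw [hb]; simp [hdvd]
    rw [hbL]
    symm
    apply Finset.sum_eq_zero
    rintro ⟨i, j, l⟩ hp
    simp only [Finset.mem_filter] at hp
    by_cases hi : k ∣ i.natAbs
    · by_cases hj : k ∣ j.natAbs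
      · by_cases hl : k ∣ l.natAbs
        · exfalso
          apply hdvd
          have : (k:ℤ) ∣ (n:ℤ) := by
            rw [← hp.2]
            exact dvd_add (dvd_add ((hdvdiff i).mp hi) ((hdvdiff j).mp hj)) ((hdvdiff l).mp hl)
          exact_mod_cast this
        · have : b l.natAbs = 0 := by rw [hb]; simp [hl]
          simp [this]
      · have : b j.natAbs = 0 := by rw [hb]; simp [hj]
        simp [this]
    · have : b i.natAbs = 0 := by rw [hb]; simp [hi]
      simp [this]
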